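/- For all nonnegative integers n and \ell, and real number r, the r-Bell numbers satisfy B_{n+\ell, r} = \sum_{j=0}^{\ell} \sum_{k=0}^{n} S_r(\ell+r, j+r) \binom{n}{k} j^{n-k} B_{k,r}. -/

import Mathlib

/-- The r-Stirling numbers of the second kind: `rStirling2 r n k` stands for
`S_r(n+r, k+r)`, satisfying the recurrence with factor `(k+r)`. -/
noncomputable def rStirling2 (r : ℝ) : ℕ → ℕ → ℝ
  | 0, 0 => 1
  | 0, _ + 1 => 0
  | n + 1, 0 => r * rStirling2 r n 0
  | n + 1, k + 1 => rStirling2 r n k + ((k + 1 : ℝ) + r) * rStirling2 r n (k + 1)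

/-- The r-Bell number: the sum over k ≤ n of `S_r(n+r,k+r)`. -/
noncomputable def rBell (r : ℝ) (n : ℕ) : ℝ :=
  ∑ k ∈ Finset.range (n + 1), rStirling2 r n k


open Finset

lemma rStirling2_eq_zero (r : ℝ) : ∀ n k, n < k → rStirling2 r n k = 0 := by
  intro n
  induction n with
  | zero => intro k hk; match k, hk with
    | k + 1, _ => rfl
  | succ n ih =>
    intro k hk
    match k, hk with
    | k + 1, hk =>
      rw [rStirling2, ih k (by omega), ih (k+1) (by omega)]
      ring

lemma rBell_eq_sum (r : ℝ) {m N : ℕ} (h : m < N) :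
    ∑ k ∈ range N, rStirling2 r m k = rBell r m := by
  rw [rBell, ← Finset.sum_range_add_sum_Ico _ (show m + 1 ≤ N by omega)]
  have : ∑ k ∈ Ico (m+1) N, rStirling2 r m k = 0 := by
    apply Finset.sum_eq_zero
    intro k hk
    exact rStirling2_eq_zero r m k (by simp [Finset.mem_Ico] at hk; omega)
  rw [this, add_zero]

lemma key_stirling (r : ℝ) : ∀ (n k : ℕ), ((k : ℝ) + 1) * rStirling2 r n (k + 1)
    = ∑ m ∈ range n, (n.choose m : ℝ) * rStirling2 r m k := by
  intro n
  induction n with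
  | zero => intro k; simp [rStirling2]
  | succ n ih =>
    intro k
    have pascal : ∀ m : ℕ, (((n+1).choose (m+1) : ℕ) : ℝ)
        = (n.choose m : ℝ) + (n.choose (m+1) : ℝ) := by
      intro m; rw [Nat.choose_succ_succ]; push_cast; ring
    have e1 : ∑ m ∈ range n, (((n+1).choose (m+1) : ℕ) : ℝ) * rStirling2 r (m+1) k
        = ∑ m ∈ range n, (n.choose m : ℝ) * rStirling2 r (m+1) k
          + ∑ m ∈ range n, (n.choose (m+1) : ℝ) * rStirling2 r (m+1) k := by
      rw [← Finset.sum_add_distrib]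
      exact Finset.sum_congr rfl fun m _ => by rw [pascal]; ring
    have e3 : ∑ m ∈ range (n+1), (n.choose m : ℝ) * rStirling2 r m k
        = ((k : ℝ)+1) * rStirling2 r n (k+1) + rStirling2 r n k := by
      rw [Finset.sum_range_succ, ← ih k]
      simp
    have e2 : ∑ m ∈ range n, (n.choose (m+1) : ℝ) * rStirling2 r (m+1) k
        + (((n+1).choose 0 : ℕ) : ℝ) * rStirling2 r 0 k
        = ((k : ℝ)+1) * rStirling2 r n (k+1) + rStirling2 r n k := by
      rw [← e3, Finset.sum_range_succ']
      norm_num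
    rw [Finset.sum_range_succ', e1, add_assoc, e2]
    cases k with
    | zero =>
      have hA : ∑ m ∈ range n, (n.choose m : ℝ) * rStirling2 r (m+1) 0
          = r * rStirling2 r n 1 := by
        have h0 : ∀ m ∈ range n, (n.choose m : ℝ) * rStirling2 r (m+1) 0
            = r * ((n.choose m : ℝ) * rStirling2 r m 0) := fun m _ => by
          show (n.choose m : ℝ) * (r * rStirling2 r m 0) = _; ring
        rw [Finset.sum_congr rfl h0, ← Finset.mul_sum, ← ih 0]
        norm_num
      rw [hA]
      show (((0:ℕ):ℝ)+1) * (rStirling2 r n 0 + (((0:ℕ):ℝ)+1+r) * rStirling2 r n 1) = _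
      norm_num
      ring
    | succ k =>
      have hA : ∑ m ∈ range n, (n.choose m : ℝ) * rStirling2 r (m+1) (k+1)
          = ((k:ℝ)+1) * rStirling2 r n (k+1)
            + ((k:ℝ)+1+r) * (((k:ℝ)+2) * rStirling2 r n (k+2)) := by
        have h0 : ∀ m ∈ range n, (n.choose m : ℝ) * rStirling2 r (m+1) (k+1)
            = (n.choose m : ℝ) * rStirling2 r m k
              + ((k:ℝ)+1+r) * ((n.choose m : ℝ) * rStirling2 r m (k+1)) := fun m _ => by
          show (n.choose m : ℝ) * (rStirling2 r m k + (((k:ℕ):ℝ)+1+r) * rStirling2 r m (k+1)) = _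
          ring
        rw [Finset.sum_congr rfl h0, Finset.sum_add_distrib, ← Finset.mul_sum, ← ih k, ← ih (k+1)]
        push_cast
        ring
      rw [hA]
      have hdef : rStirling2 r (n+1) (k+2)
          = rStirling2 r n (k+1) + (((k+1:ℕ):ℝ)+1+r) * rStirling2 r n (k+2) := rfl
      rw [hdef]
      push_cast
      ring

lemma rBell_rec (r : ℝ) (n : ℕ) :
    rBell r (n + 1) = r * rBell r n + ∑ m ∈ range (n + 1), (n.choose m : ℝ) * rBell r m := by
  have step : ∀ k ∈ range (n+1), rStirling2 r (n+1) (k+1)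
      = rStirling2 r n k + (((k:ℝ)+1) * rStirling2 r n (k+1) + r * rStirling2 r n (k+1)) := by
    intro k _
    show rStirling2 r n k + (((k:ℕ):ℝ)+1+r) * rStirling2 r n (k+1) = _
    ring
  have h0 : rStirling2 r (n+1) 0 = r * rStirling2 r n 0 := rfl
  rw [rBell, Finset.sum_range_succ', h0, Finset.sum_congr rfl step,
    Finset.sum_add_distrib, Finset.sum_add_distrib, ← Finset.mul_sum]
  have hshift : ∑ k ∈ range (n+1), rStirling2 r n (k+1)
      = rBell r n - rStirling2 r n 0 := by
    have := Finset.sum_range_succ' (fun k => rStirling2 r n k) (n+1)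
    have hz : rStirling2 r n (n+1) = 0 := rStirling2_eq_zero r n (n+1) (by omega)
    have hb : ∑ k ∈ range (n+1+1), rStirling2 r n k = rBell r n := by
      rw [Finset.sum_range_succ, hz, add_zero, rBell]
    rw [hb] at this
    linarith [this]
  have hkey : ∑ k ∈ range (n+1), ((k:ℝ)+1) * rStirling2 r n (k+1)
      = ∑ m ∈ range (n+1), (n.choose m : ℝ) * rBell r m - rBell r n := by
    have e : ∀ k ∈ range (n+1), ((k:ℝ)+1) * rStirling2 r n (k+1)
        = ∑ m ∈ range n, (n.choose m : ℝ) * rStirling2 r m k := fun k _ => key_stirling r n k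
    rw [Finset.sum_congr rfl e, Finset.sum_comm]
    have e2 : ∀ m ∈ range n, ∑ k ∈ range (n+1), (n.choose m : ℝ) * rStirling2 r m k
        = (n.choose m : ℝ) * rBell r m := by
      intro m hm
      rw [← Finset.mul_sum, rBell_eq_sum r (by simp at hm; omega)]
    rw [Finset.sum_congr rfl e2, Finset.sum_range_succ, Nat.choose_self]
    push_cast
    ring
  rw [hshift, hkey, rBell]
  ring

lemma binom_swap (x : ℝ) (y : ℕ → ℝ) (n : ℕ) :
    ∑ k ∈ range (n+1), (n.choose k : ℝ) * x^(n-k)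
      * ∑ m ∈ range (k+1), (k.choose m : ℝ) * y m
    = ∑ m ∈ range (n+1), (n.choose m : ℝ) * (x+1)^(n-m) * y m := by
  have h1 : ∀ k ∈ range (n+1), (n.choose k : ℝ) * x^(n-k)
        * ∑ m ∈ range (k+1), (k.choose m : ℝ) * y m
      = ∑ m ∈ Finset.Ico 0 (k+1),
          (n.choose k : ℝ) * (k.choose m : ℝ) * x^(n-k) * y m := by
    intro k _
    rw [Finset.mul_sum]
    rw [show Finset.Ico 0 (k+1) = range (k+1) by rw [Nat.Ico_zero_eq_range]]
    exact Finset.sum_congr rfl fun m _ => by ring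
  rw [Finset.sum_congr rfl h1]
  have h2 : ∑ k ∈ range (n+1), ∑ m ∈ Finset.Ico 0 (k+1),
        (n.choose k : ℝ) * (k.choose m : ℝ) * x^(n-k) * y m
      = ∑ m ∈ range (n+1), ∑ k ∈ Finset.Ico m (n+1),
        (n.choose k : ℝ) * (k.choose m : ℝ) * x^(n-k) * y m := by
    rw [show range (n+1) = Finset.Ico 0 (n+1) by rw [Nat.Ico_zero_eq_range]]
    exact (Finset.sum_Ico_Ico_comm 0 (n+1)
      (fun m k => (n.choose k : ℝ) * (k.choose m : ℝ) * x^(n-k) * y m)).symm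
  rw [h2]
  apply Finset.sum_congr rfl
  intro m hm
  have hmn : m ≤ n := by simp at hm; omega
  rw [Finset.sum_Ico_eq_sum_range]
  have hlen : n + 1 - m = (n - m) + 1 := by omega
  rw [hlen]
  have h3 : ∀ i ∈ range ((n-m)+1),
      (n.choose (m+i) : ℝ) * ((m+i).choose m : ℝ) * x^(n-(m+i)) * y m
      = (n.choose m : ℝ) * (((n-m).choose i : ℝ) * x^((n-m)-i)) * y m := by
    intro i hi
    have hi' : i ≤ n - m := by simp at hi; omega
    have hc : n.choose (m+i) * (m+i).choose m = n.choose m * (n-m).choose i := by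
      have := Nat.choose_mul (n := n) (show m ≤ m + i by omega)
      simpa using this
    have hx : n - (m+i) = (n-m) - i := by omega
    have hc' : ((n.choose (m+i)) : ℝ) * (((m+i).choose m) : ℝ)
        = ((n.choose m) : ℝ) * (((n-m).choose i) : ℝ) := by exact_mod_cast congrArg (Nat.cast (R := ℝ)) hc
    rw [hx]
    calc ((n.choose (m+i)) : ℝ) * (((m+i).choose m) : ℝ) * x^((n-m)-i) * y m
        = (((n.choose (m+i)) : ℝ) * (((m+i).choose m) : ℝ)) * (x^((n-m)-i) * y m) := by ring
      _ = (((n.choose m) : ℝ) * (((n-m).choose i) : ℝ)) * (x^((n-m)-i) * y m) := by rw [hc']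
      _ = _ := by ring
  rw [Finset.sum_congr rfl h3, ← Finset.sum_mul, ← Finset.mul_sum]
  have h4 : ∑ i ∈ range ((n-m)+1), ((n-m).choose i : ℝ) * x^((n-m)-i)
      = (x+1)^(n-m) := by
    rw [show x + 1 = 1 + x by ring, add_pow]
    exact Finset.sum_congr rfl fun i _ => by rw [one_pow]; ring
  rw [h4]

lemma T_rec (r x : ℝ) (n : ℕ) :
    ∑ k ∈ range (n+2), ((n+1).choose k : ℝ) * x^(n+1-k) * rBell r k
    = ∑ k ∈ range (n+1), (n.choose k : ℝ) * (x+1)^(n-k) * rBell r k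
      + (x + r) * ∑ k ∈ range (n+1), (n.choose k : ℝ) * x^(n-k) * rBell r k := by
  rw [Finset.sum_range_succ']
  have pas : ∀ k ∈ range (n+1), (((n+1).choose (k+1) : ℕ) : ℝ) * x^(n+1-(k+1)) * rBell r (k+1)
      = (n.choose k : ℝ) * x^(n-k) * rBell r (k+1)
        + (n.choose (k+1) : ℝ) * x^(n-k) * rBell r (k+1) := by
    intro k _
    rw [Nat.choose_succ_succ, Nat.succ_sub_succ]
    push_cast
    ring
  rw [Finset.sum_congr rfl pas, Finset.sum_add_distrib]
  have hxT : ∑ k ∈ range (n+1), (n.choose (k+1) : ℝ) * x^(n-k) * rBell r (k+1)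
      + (((n+1).choose 0 : ℕ) : ℝ) * x^(n+1-0) * rBell r 0
      = x * ∑ k ∈ range (n+1), (n.choose k : ℝ) * x^(n-k) * rBell r k := by
    rw [Finset.mul_sum,
      Finset.sum_range_succ' (fun k => x * ((n.choose k : ℝ) * x^(n-k) * rBell r k)) n,
      Finset.sum_range_succ, Nat.choose_succ_self]
    norm_num
    congr 1
    · apply Finset.sum_congr rfl
      intro k hk
      have hk' : k < n := by simp at hk; omega
      have h5 : n - k = (n - (k+1)) + 1 := by omega
      rw [h5, pow_succ]
      ring
    · have h6 : n + 1 = (n - 0) + 1 := rfl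
      rw [h6, pow_succ, Nat.sub_zero]
      ring
  have hBrec : ∀ k ∈ range (n+1), (n.choose k : ℝ) * x^(n-k) * rBell r (k+1)
      = r * ((n.choose k : ℝ) * x^(n-k) * rBell r k)
        + (n.choose k : ℝ) * x^(n-k) * ∑ m ∈ range (k+1), (k.choose m : ℝ) * rBell r m := by
    intro k _
    rw [rBell_rec]
    ring
  rw [add_assoc, hxT, Finset.sum_congr rfl hBrec, Finset.sum_add_distrib, ← Finset.mul_sum,
    binom_swap x (rBell r) n]
  ring

lemma stirling_sum_step (r : ℝ) (ℓ : ℕ) (F : ℕ → ℝ) :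
    ∑ j ∈ range (ℓ+2), rStirling2 r (ℓ+1) j * F j
    = ∑ j ∈ range (ℓ+1), rStirling2 r ℓ j * (F (j+1) + ((j:ℝ) + r) * F j) := by
  rw [Finset.sum_range_succ']
  have h1 : ∀ j ∈ range (ℓ+1), rStirling2 r (ℓ+1) (j+1) * F (j+1)
      = rStirling2 r ℓ j * F (j+1)
        + (((j+1 : ℕ) : ℝ) + r) * (rStirling2 r ℓ (j+1) * F (j+1)) := by
    intro j _
    show (rStirling2 r ℓ j + (((j:ℕ):ℝ)+1+r) * rStirling2 r ℓ (j+1)) * F (j+1) = _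
    push_cast
    ring
  rw [Finset.sum_congr rfl h1, Finset.sum_add_distrib, add_assoc]
  have h0 : rStirling2 r (ℓ+1) 0 * F 0 = (((0:ℕ):ℝ) + r) * (rStirling2 r ℓ 0 * F 0) := by
    show (r * rStirling2 r ℓ 0) * F 0 = _
    push_cast
    ring
  have h2 : ∑ j ∈ range (ℓ+1), (((j+1 : ℕ) : ℝ) + r) * (rStirling2 r ℓ (j+1) * F (j+1))
      + rStirling2 r (ℓ+1) 0 * F 0
      = ∑ j ∈ range (ℓ+1), ((j : ℝ) + r) * (rStirling2 r ℓ j * F j) := by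
    rw [h0, ← Finset.sum_range_succ' (fun j => ((j:ℝ)+r) * (rStirling2 r ℓ j * F j)) (ℓ+1),
      Finset.sum_range_succ, rStirling2_eq_zero r ℓ (ℓ+1) (by omega)]
    simp
  rw [h2, ← Finset.sum_add_distrib]
  exact Finset.sum_congr rfl fun j _ => by ring


theorem rBell_spivey (n ℓ : ℕ) (r : ℝ) :
    rBell r (n + ℓ) =
      ∑ j ∈ Finset.range (ℓ + 1), ∑ k ∈ Finset.range (n + 1),
        rStirling2 r ℓ j * (n.choose k : ℝ) * (j : ℝ) ^ (n - k) * rBell r k := by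
  induction ℓ generalizing n with
  | zero =>
    rw [Finset.sum_range_one, Nat.add_zero]
    rw [Finset.sum_eq_single_of_mem n (Finset.self_mem_range_succ n)]
    · rw [Nat.choose_self, Nat.sub_self]
      show rBell r n = 1 * ((1:ℕ):ℝ) * _ ^ (0:ℕ) * rBell r n
      norm_num
    · intro k hk hkn
      have hz : ((0:ℕ):ℝ)^(n-k) = 0 := by
        rw [Nat.cast_zero]
        exact zero_pow (by simp at hk; omega)
      rw [hz]
      ring
  | succ ℓ ih =>
    have h1 : n + (ℓ+1) = (n+1) + ℓ := by omega
    rw [h1, ih (n+1)]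
    have hL : ∀ j ∈ range (ℓ+1),
        ∑ k ∈ range (n+1+1), rStirling2 r ℓ j * ((n+1).choose k : ℝ)
          * (j : ℝ) ^ (n+1-k) * rBell r k
        = rStirling2 r ℓ j *
            ((∑ k ∈ range (n+1), (n.choose k : ℝ) * ((j+1:ℕ):ℝ)^(n-k) * rBell r k)
              + ((j:ℝ) + r) * ∑ k ∈ range (n+1), (n.choose k : ℝ) * ((j:ℕ):ℝ)^(n-k) * rBell r k) := by
      intro j _
      have e0 : ∑ k ∈ range (n+1+1), rStirling2 r ℓ j * ((n+1).choose k : ℝ)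
            * (j : ℝ) ^ (n+1-k) * rBell r k
          = rStirling2 r ℓ j * ∑ k ∈ range (n+2),
              ((n+1).choose k : ℝ) * ((j:ℝ)) ^ (n+1-k) * rBell r k := by
        rw [Finset.mul_sum]
        exact Finset.sum_congr rfl fun k _ => by ring
      rw [e0, T_rec r (j:ℝ) n]
      have hcast : ∑ k ∈ range (n+1), (n.choose k : ℝ) * ((j:ℝ)+1)^(n-k) * rBell r k
          = ∑ k ∈ range (n+1), (n.choose k : ℝ) * ((j+1:ℕ):ℝ)^(n-k) * rBell r k := by
        apply Finset.sum_congr rfl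
        intro k _
        push_cast
        ring
      rw [hcast]
    rw [Finset.sum_congr rfl hL,
      ← stirling_sum_step r ℓ (fun j => ∑ k ∈ range (n+1), (n.choose k : ℝ) * ((j:ℕ):ℝ)^(n-k) * rBell r k)]
    apply Finset.sum_congr rfl
    intro j _
    rw [Finset.mul_sum]
    exact Finset.sum_congr rfl fun k _ => by ring
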